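/- arXiv:2404.10913 — 2 statements merged into one kernel-verified Lean document; each statement's English description precedes it below -/
import Mathlib

section
/- Let φ be a Boolean function on n variables and ψ a Boolean function on m variables. Define ρ on n + m + 2 variables (variables x_1,…,x_n, y_1,…,y_m, z, z') by ρ = (φ(x) ∧ z) ∨ (x_1 ∧ ⋯ ∧ x_n ∧ ψ(y) ∧ ¬z ∧ z'). Then the number of satisfying assignments of ρ equals #sat(φ) · 2^(m+1) + #sat(ψ). -/
theorem stmt_1 (n m : ℕ) (φ : (Fin n → Bool) → Bool) (ψ : (Fin m → Bool) → Bool)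
    (ρ : (Fin n → Bool) × (Fin m → Bool) × Bool × Bool → Bool)
    (hρ : ∀ x y z z', ρ (x, y, z, z') =
      ((φ x && z) || (decide (∀ i, x i = true) && ψ y && !z && z'))) :
    (Finset.univ.filter (fun w : (Fin n → Bool) × (Fin m → Bool) × Bool × Bool =>
        ρ w = true)).card =
      (Finset.univ.filter (fun v : Fin n → Bool => φ v = true)).card * 2 ^ (m + 1) +
        (Finset.univ.filter (fun v : Fin m → Bool => ψ v = true)).card := by
  have h : ∀ w : (Fin n → Bool) × (Fin m → Bool) × Bool × Bool,
      ρ w = ((φ w.1 && w.2.2.1) || (decide (∀ i, w.1 i = true) && ψ w.2.1 && !w.2.2.1 && w.2.2.2)) := by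
    rintro ⟨x, y, z, z'⟩; exact hρ x y z z'
  have hc : ∀ x : Fin n → Bool, (decide (∀ i, x i = true)) = decide (x = fun _ => true) := by
    intro x; simp [funext_iff]
  simp only [Finset.card_filter, h, hc]
  rw [Fintype.sum_prod_type]
  simp only [Fintype.sum_prod_type, Fintype.sum_bool]
  simp only [Bool.and_true, Bool.and_false, Bool.not_true, Bool.not_false, Bool.or_false,
    Bool.false_or, Bool.false_and, Bool.or_self, if_false, add_zero,
    Bool.and_eq_true, decide_eq_true_eq, ite_and]
  simp only [Finset.sum_add_distrib, Finset.sum_const, Finset.card_univ, smul_eq_mul]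
  have hB : (∑ x : Fin n → Bool, ∑ y : Fin m → Bool,
      (if x = (fun _ => true) then (if ψ y = true then (1:ℕ) else 0) else 0)) =
      ∑ y : Fin m → Bool, if ψ y = true then 1 else 0 := by
    rw [Finset.sum_comm]
    simp [Finset.sum_ite_eq']
  rw [hB]
  simp only [Fintype.card_fun, Fintype.card_bool, Fintype.card_fin, if_false]
  simp only [← Finset.sum_mul, ← Finset.mul_sum, Bool.false_eq_true, if_false, zero_mul, add_zero, mul_comm]
  ring
end

section
/- Let n ≥ 1 and a_0, a_1, …, a_n ∈ {0,1} be the binary digits of k = Σ_{i=0}^{n} 2^{n-i} · a_i, with k ≤ 2^n. Define the Boolean function ψ on variables x_1,…,x_n by ψ = ¬l(a_0) → (x_1 ⋄_{a_1} (x_2 ⋄_{a_2} ⋯ (x_{n-1} ⋄_{a_{n-1}} (x_n ∧ l(a_n)))⋯)), where ⋄_0 = ∧, ⋄_1 = ∨, l(0) = False, l(1) = True. Then the number of satisfying assignments of ψ equals k. -/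
/-- The nested formula `x_1 ⋄_{a_1} (x_2 ⋄_{a_2} ⋯ (x_n ∧ l(a_n))⋯)`,
where `⋄_0 = ∧`, `⋄_1 = ∨` and `l(0) = False`, `l(1) = True`. -/
def innerForm : (n : ℕ) → (Fin n → Bool) → (Fin n → Bool) → Bool
  | 0, _, _ => true
  | 1, a, x => x 0 && a 0
  | (n + 2), a, x =>
      if a 0 then x 0 || innerForm (n + 1) (fun i => a i.succ) (fun i => x i.succ)
      else x 0 && innerForm (n + 1) (fun i => a i.succ) (fun i => x i.succ)

lemma card_cons (n : ℕ) (p : Bool → (Fin (n+1) → Bool) → Bool) :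
    (Finset.univ.filter fun x : Fin (n+2) → Bool =>
        p (x 0) (fun i => x i.succ) = true).card
    = (Finset.univ.filter fun y : Fin (n+1) → Bool => p true y = true).card
      + (Finset.univ.filter fun y : Fin (n+1) → Bool => p false y = true).card := by
  simp only [Finset.card_filter]
  rw [← Equiv.sum_comp (Fin.consEquiv (fun _ : Fin (n+2) => Bool))
    (fun x => if p (x 0) (fun i => x i.succ) = true then 1 else 0)]
  rw [Fintype.sum_prod_type, Fintype.sum_bool]
  simp [Fin.consEquiv]

lemma count (n : ℕ) (a : Fin (n+1) → Bool) :
    (Finset.univ.filter fun x : Fin (n+1) → Bool => innerForm (n+1) a x = true).card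
    = ∑ i : Fin (n+1), 2 ^ (n - (i : ℕ)) * (a i).toNat := by
  induction n with
  | zero =>
      cases h : a 0 <;> simp only [innerForm, h, Bool.and_false, Bool.and_true]
      · simp [Finset.filter_eq_empty_iff, h]
      · simp only [Fin.sum_univ_succ]
        rw [show (Finset.filter (fun x : Fin 1 → Bool => x 0 = true) Finset.univ).card
          = 1 by decide]
        simp [h, Fin.eq_zero]
  | succ m ih =>
      rw [Fin.sum_univ_succ]
      cases h : a 0 <;> simp only [innerForm, h, if_true, if_false, Bool.false_eq_true]
      · rw [card_cons (m) (fun b y => b && innerForm (m+1) (fun i => a i.succ) y)]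
        simp [ih, Fin.succ]
      · rw [card_cons (m) (fun b y => b || innerForm (m+1) (fun i => a i.succ) y)]
        simp [ih]

theorem stmt_3 (n : ℕ) (hn : 1 ≤ n) (a : Fin (n + 1) → Bool)
    (k : ℕ) (hk : k = ∑ i : Fin (n + 1), 2 ^ (n - (i : ℕ)) * (a i).toNat)
    (hk' : k ≤ 2 ^ n) :
    (Finset.univ.filter (fun x : Fin n → Bool =>
        (a 0 || innerForm n (fun i => a i.succ) x) = true)).card = k := by
  obtain ⟨m, rfl⟩ : ∃ m, n = m + 1 := ⟨n - 1, (Nat.succ_pred_eq_of_pos hn).symm⟩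
  rw [Fin.sum_univ_succ] at hk
  cases h : a 0
  · simp only [h, Bool.false_or]
    rw [count]
    simp only [h, Bool.toNat_false, Nat.mul_zero, Nat.zero_add] at hk
    rw [hk]
    exact Finset.sum_congr rfl fun i _ => by rw [Fin.val_succ, Nat.succ_sub_succ]
  · simp only [h, Bool.true_or]
    rw [Finset.filter_true, Finset.card_univ]
    simp only [h, Bool.toNat_true, Nat.mul_one, Fin.val_zero, Nat.sub_zero] at hk
    have : Fintype.card (Fin (m+1) → Bool) = 2 ^ (m+1) := by
      simp [Fintype.card_fun]
    omega
end
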